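/- Under the standard Solow–Swan hypotheses, solutions approach the equilibrium monotonically: if x is a solution with initial condition x₀ and 0 < x₀ < E, then x is nondecreasing on [0,∞) and x₀ ≤ x(t) < E for all t ≥ 0; if x₀ > E, then x is nonincreasing on [0,∞) and E < x(t) ≤ x₀ for all t ≥ 0. -/

import Mathlib

open Set Filter Topology

/-- If a function has positive derivative at `a`, it is eventually greater than `f a`
just to the right of `a`. -/
lemma aux_ev_gt {f : ℝ → ℝ} {d a : ℝ} (hf : HasDerivAt f d a) (hd : 0 < d) :
    ∀ᶠ t in 𝓝[>] a, f a < f t := by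
  have h := hasDerivAt_iff_tendsto_slope.mp hf
  have h2 : ∀ᶠ t in 𝓝[≠] a, 0 < slope f a t := h.eventually (eventually_gt_nhds hd)
  have hle : 𝓝[>] a ≤ 𝓝[Set.compl {a}] a := nhdsWithin_mono a (fun y hy => ne_of_gt hy)
  filter_upwards [h2.filter_mono hle, self_mem_nhdsWithin] with t ht hta
  have hta' : (0:ℝ) < t - a := sub_pos.mpr hta
  rw [slope_def_field] at ht
  have h3 := mul_pos ht hta'
  rw [div_mul_cancel₀ _ (ne_of_gt hta')] at h3
  linarith

lemma aux_ev_lt {f : ℝ → ℝ} {d a : ℝ} (hf : HasDerivAt f d a) (hd : d < 0) :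
    ∀ᶠ t in 𝓝[>] a, f t < f a := by
  have := aux_ev_gt (hf.neg) (by linarith : 0 < -d)
  filter_upwards [this] with t ht
  simpa using ht

/-- First-crossing argument: if `x 0 = c` and the autonomous vector field is positive at `c`,
then `x` stays `≥ c` for all `t ≥ 0`. -/
lemma aux_stay_ge (g x : ℝ → ℝ) (c : ℝ)
    (hx : ∀ t : ℝ, 0 ≤ t → HasDerivAt x (g (x t)) t)
    (h0 : x 0 = c) (hc : 0 < g c) : ∀ t : ℝ, 0 ≤ t → c ≤ x t := by
  intro t₁ ht₁
  by_contra hlt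
  push_neg at hlt
  have hcont : ∀ s ∈ Icc (0:ℝ) t₁, ContinuousAt x s := fun s hs => (hx s hs.1).continuousAt
  have hSclosed : IsClosed (Icc (0:ℝ) t₁ ∩ x ⁻¹' {c}) :=
    ContinuousOn.preimage_isClosed_of_isClosed
      (fun s hs => (hcont s hs).continuousWithinAt) isClosed_Icc isClosed_singleton
  have hSne : (Icc (0:ℝ) t₁ ∩ x ⁻¹' {c}).Nonempty := ⟨0, ⟨le_rfl, ht₁⟩, h0⟩
  have hSbdd : BddAbove (Icc (0:ℝ) t₁ ∩ x ⁻¹' {c}) := ⟨t₁, fun s hs => hs.1.2⟩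
  obtain ⟨hTmem, (hTx : x (sSup _) = c)⟩ := hSclosed.csSup_mem hSne hSbdd
  set T := sSup (Icc (0:ℝ) t₁ ∩ x ⁻¹' {c})
  have hTS : x T = c := hTx
  have hT0 : 0 ≤ T := hTmem.1
  have hTt₁ : T < t₁ := lt_of_le_of_ne hTmem.2
    (fun h => absurd (by rw [← h]; exact hTS) (ne_of_lt hlt))
  have hder : HasDerivAt x (g c) T := by have := hx T hT0; rwa [hTS] at this
  have hev := aux_ev_gt hder hc
  obtain ⟨u, hu, huIoc⟩ := (hev.and (Ioc_mem_nhdsGT_of_mem ⟨le_rfl, hTt₁⟩)).exists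
  rw [hTS] at hu
  -- x u > c, x t₁ < c, so by IVT there is a crossing point in (u, t₁], above T = sSup S
  have hut₁ : u ≤ t₁ := huIoc.2
  have hcontu : ContinuousOn x (Icc u t₁) := fun s hs =>
    (hcont s ⟨le_trans (le_trans hT0 huIoc.1.le) hs.1, hs.2⟩).continuousWithinAt
  obtain ⟨w, hw, hwc⟩ := intermediate_value_Icc' hut₁ hcontu ⟨hlt.le, hu.le⟩
  have hwS : w ∈ Icc (0:ℝ) t₁ ∩ x ⁻¹' {c} :=
    ⟨⟨le_trans hT0 (le_trans huIoc.1.le hw.1), hw.2⟩, hwc⟩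
  have : w ≤ T := le_csSup hSbdd hwS
  exact absurd (lt_of_lt_of_le huIoc.1 (le_trans hw.1 this)) (lt_irrefl T)

lemma aux_stay_le (g x : ℝ → ℝ) (c : ℝ)
    (hx : ∀ t : ℝ, 0 ≤ t → HasDerivAt x (g (x t)) t)
    (h0 : x 0 = c) (hc : g c < 0) : ∀ t : ℝ, 0 ≤ t → x t ≤ c := by
  have key := aux_stay_ge (fun z => -g (-z)) (fun t => -x t) (-c)
    (fun t ht => by simpa using (hx t ht).fun_neg) (by simp [h0]) (by simpa using hc)
  intro t ht
  have h2 : -c ≤ -x t := key t ht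
  linarith

/-- Barrier lemma: a solution that does not start at the equilibrium `E` never reaches it. -/
lemma aux_barrier (F : ℝ → ℝ) (C E : ℝ)
    (hF : LocallyLipschitz F) (hEeq : F E = C * E)
    (x : ℝ → ℝ)
    (hode : ∀ t : ℝ, 0 ≤ t → HasDerivAt x (F (x t) - C * x t) t)
    (h0 : x 0 ≠ E) : ∀ t : ℝ, 0 ≤ t → x t ≠ E := by
  intro t₁ ht₁ hxt₁
  have hcont : ∀ s : ℝ, 0 ≤ s → ContinuousAt x s := fun s hs => (hode s hs).continuousAt
  have hSclosed : IsClosed (Icc (0:ℝ) t₁ ∩ x ⁻¹' {E}) :=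
    ContinuousOn.preimage_isClosed_of_isClosed
      (fun s hs => (hcont s hs.1).continuousWithinAt) isClosed_Icc isClosed_singleton
  have hSne : (Icc (0:ℝ) t₁ ∩ x ⁻¹' {E}).Nonempty := ⟨t₁, ⟨ht₁, le_rfl⟩, hxt₁⟩
  have hSbdd : BddBelow (Icc (0:ℝ) t₁ ∩ x ⁻¹' {E}) := ⟨0, fun s hs => hs.1.1⟩
  obtain ⟨hTmem, (hTx : x (sInf _) = E)⟩ := hSclosed.csInf_mem hSne hSbdd
  set T := sInf (Icc (0:ℝ) t₁ ∩ x ⁻¹' {E})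
  have hT0 : 0 ≤ T := hTmem.1
  have hTpos : 0 < T := lt_of_le_of_ne hT0
    (fun h => h0 (by rw [h]; exact hTx))
  -- local Lipschitz data near E
  obtain ⟨K, s, hsE, hKs⟩ := hF E
  -- the vector field
  set v : ℝ → ℝ := fun z => F z - C * z with hv
  have hmul : LipschitzWith ‖C‖₊ (fun z : ℝ => C * z) := by
    apply LipschitzWith.of_dist_le_mul
    intro a b
    rw [Real.dist_eq, Real.dist_eq, ← mul_sub, abs_mul]
    simp [abs_mul]
  have hvlip : LipschitzOnWith (K + ‖C‖₊) v s :=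
    hKs.sub (hmul.lipschitzOnWith (s := s))
  -- choose a left endpoint a < T with trajectory in s on [a, T]
  have hxT : x T = E := hTx
  have hmem : ∀ᶠ u in 𝓝 T, x u ∈ s := (hcont T hT0).preimage_mem_nhds (hxT ▸ hsE)
  obtain ⟨δ, hδpos, hδ⟩ := Metric.eventually_nhds_iff.mp hmem
  set a : ℝ := max 0 (T - δ/2) with ha
  have ha0 : 0 ≤ a := le_max_left _ _
  have haT : a < T := by
    rcases max_cases (0:ℝ) (T - δ/2) with ⟨h1, _⟩ | ⟨h1, _⟩ <;> rw [ha, h1] <;> [exact hTpos; linarith]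
  have hclose : ∀ u ∈ Icc a T, x u ∈ s := by
    intro u hu
    apply hδ
    rw [Real.dist_eq, abs_sub_lt_iff]
    have : T - δ/2 ≤ a := le_max_right _ _
    constructor <;> [linarith [hu.2]; linarith [hu.1]]
  -- apply backward uniqueness against the constant solution E
  have hzero : F E - C * E = 0 := by rw [hEeq]; ring
  have heq : EqOn x (fun _ : ℝ => E) (Icc a T) := by
    apply ODE_solution_unique_of_mem_Icc_left
      (v := fun _ : ℝ => v) (s := fun _ : ℝ => s) (K := K + ‖C‖₊)
      (fun _ _ => hvlip)
      (fun u hu => (hcont u (le_trans ha0 hu.1)).continuousWithinAt)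
      (fun u hu => ((hode u (le_trans ha0 hu.1.le))).hasDerivWithinAt)
      (fun u hu => hclose u (Ioc_subset_Icc_self hu))
      (continuousOn_const)
      (fun u _ => by
        have : HasDerivWithinAt (fun _ : ℝ => E) 0 (Iic u) u := (hasDerivWithinAt_const u _ E)
        simpa [hv, hzero] using this)
      (fun u _ => mem_of_mem_nhds hsE)
      (by simpa using hxT)
  have hxa : x a = E := heq ⟨le_rfl, haT.le⟩
  have haS : a ∈ Icc (0:ℝ) t₁ ∩ x ⁻¹' {E} := ⟨⟨ha0, le_trans haT.le hTmem.2⟩, hxa⟩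
  exact absurd (csInf_le hSbdd haS) (not_le.mpr haT)

/-- Sign preservation via the barrier and the intermediate value theorem. -/
lemma aux_lt_of_ne (x : ℝ → ℝ) (E : ℝ)
    (hcont : ∀ t : ℝ, 0 ≤ t → ContinuousAt x t)
    (hne : ∀ t : ℝ, 0 ≤ t → x t ≠ E) (h0 : x 0 < E) :
    ∀ t : ℝ, 0 ≤ t → x t < E := by
  intro t ht
  by_contra h
  push_neg at h
  have hgt : E < x t := lt_of_le_of_ne h (Ne.symm (hne t ht))
  obtain ⟨c, hc, hcE⟩ := intermediate_value_Icc ht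
    (fun s hs => (hcont s hs.1).continuousWithinAt) ⟨h0.le, hgt.le⟩
  exact hne c hc.1 hcE

lemma aux_gt_of_ne (x : ℝ → ℝ) (E : ℝ)
    (hcont : ∀ t : ℝ, 0 ≤ t → ContinuousAt x t)
    (hne : ∀ t : ℝ, 0 ≤ t → x t ≠ E) (h0 : E < x 0) :
    ∀ t : ℝ, 0 ≤ t → E < x t := by
  intro t ht
  by_contra h
  push_neg at h
  have hlt : x t < E := lt_of_le_of_ne h (hne t ht)
  obtain ⟨c, hc, hcE⟩ := intermediate_value_Icc' ht
    (fun s hs => (hcont s hs.1).continuousWithinAt) ⟨hlt.le, h0.le⟩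
  exact hne c hc.1 hcE

/-- Under the standard Solow–Swan hypotheses, solutions approach the
equilibrium monotonically. -/
theorem solow_swan_monotone_approach
    (F : ℝ → ℝ) (C E : ℝ) (hC : 0 < C)
    (hF : LocallyLipschitz F)
    (hE : 0 < E) (hEeq : F E = C * E)
    (hlt : ∀ z ∈ Set.Ioo (0 : ℝ) E, C * z < F z)
    (hgt : ∀ z : ℝ, E < z → F z < C * z)
    (x : ℝ → ℝ) (x₀ : ℝ) (hinit : x 0 = x₀)
    (hode : ∀ t : ℝ, 0 ≤ t → HasDerivAt x (F (x t) - C * x t) t) :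
    (0 < x₀ → x₀ < E →
      MonotoneOn x (Set.Ici (0 : ℝ)) ∧ ∀ t : ℝ, 0 ≤ t → x₀ ≤ x t ∧ x t < E) ∧
    (E < x₀ →
      AntitoneOn x (Set.Ici (0 : ℝ)) ∧ ∀ t : ℝ, 0 ≤ t → E < x t ∧ x t ≤ x₀) := by
  have hcont : ∀ t : ℝ, 0 ≤ t → ContinuousAt x t := fun t ht => (hode t ht).continuousAt
  have hcontOn : ContinuousOn x (Set.Ici 0) := fun t ht => (hcont t ht).continuousWithinAt
  have hderiv : ∀ t : ℝ, 0 ≤ t → deriv x t = F (x t) - C * x t :=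
    fun t ht => (hode t ht).deriv
  constructor
  · intro hx₀pos hx₀lt
    have hne : ∀ t : ℝ, 0 ≤ t → x t ≠ E :=
      aux_barrier F C E hF hEeq x hode (by rw [hinit]; exact ne_of_lt hx₀lt)
    have hub : ∀ t : ℝ, 0 ≤ t → x t < E :=
      aux_lt_of_ne x E hcont hne (by rw [hinit]; exact hx₀lt)
    have hlb : ∀ t : ℝ, 0 ≤ t → x₀ ≤ x t :=
      aux_stay_ge (fun z => F z - C * z) x x₀ hode hinit
        (sub_pos.mpr (hlt x₀ ⟨hx₀pos, hx₀lt⟩))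
    have hmono : StrictMonoOn x (Set.Ici (0:ℝ)) := by
      apply strictMonoOn_of_deriv_pos (convex_Ici 0) hcontOn
      intro t ht
      rw [interior_Ici] at ht
      rw [hderiv t ht.le]
      exact sub_pos.mpr (hlt (x t) ⟨lt_of_lt_of_le hx₀pos (hlb t ht.le), hub t ht.le⟩)
    exact ⟨hmono.monotoneOn, fun t ht => ⟨hlb t ht, hub t ht⟩⟩
  · intro hx₀gt
    have hne : ∀ t : ℝ, 0 ≤ t → x t ≠ E :=
      aux_barrier F C E hF hEeq x hode (by rw [hinit]; exact ne_of_gt hx₀gt)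
    have hlb : ∀ t : ℝ, 0 ≤ t → E < x t :=
      aux_gt_of_ne x E hcont hne (by rw [hinit]; exact hx₀gt)
    have hub : ∀ t : ℝ, 0 ≤ t → x t ≤ x₀ :=
      aux_stay_le (fun z => F z - C * z) x x₀ hode hinit
        (sub_neg.mpr (hgt x₀ hx₀gt))
    have hanti : StrictAntiOn x (Set.Ici (0:ℝ)) := by
      apply strictAntiOn_of_deriv_neg (convex_Ici 0) hcontOn
      intro t ht
      rw [interior_Ici] at ht
      rw [hderiv t ht.le]
      exact sub_neg.mpr (hgt (x t) (hlb t ht.le))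
    exact ⟨hanti.antitoneOn, fun t ht => ⟨hlb t ht, hub t ht⟩⟩
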